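/- arXiv:2601.15527 — 2 statements merged into one kernel-verified Lean document; each statement's English description precedes it below -/
import Mathlib

section
/- For every n and K ⊆ [2, n+1], with τ_n(i) = n+3−i and J^max := J ∪ {n+2}: Σ_{J ⊆ [2,n+1]∖K} (−1)^{n−|K|+|J|} α(J^max)!̂ = Σ_{J ⊆ K} (−1)^{|K|−|J|} (|J|+2) α(τ_n(J))!̂. -/
open Finset

/-- Positions of descents of a permutation of `Fin (n+1)` in one-line notation. -/
def descSet (n : ℕ) (σ : Equiv.Perm (Fin (n+1))) : Finset (Fin n) :=
  Finset.univ.filter (fun i : Fin n => σ i.succ < σ i.castSucc)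

/-- Number of descents. -/
def des (n : ℕ) (σ : Equiv.Perm (Fin (n+1))) : ℕ := (descSet n σ).card

/-- Descent top set, with values written 1-based (so `DT n σ ⊆ [2, n+1]`). -/
def DT (n : ℕ) (σ : Equiv.Perm (Fin (n+1))) : Finset ℕ :=
  (descSet n σ).image (fun i => (σ i.castSucc : ℕ) + 1)

/-- `β!̂ = (k+1)^{β₁} k^{β₂} ⋯ 2^{β_k}` for a tuple `β` of length `k`. -/
def hatFac (β : List ℕ) : ℕ :=
  (β.zipIdx.map (fun p => (β.length + 1 - p.2) ^ p.1)).prod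

/-- `α(X)!̂` where, for `X = {x₁ < … < x_k}`, `α(X) = (x₁ - 1, x₂ - x₁, …, x_k - x_{k-1})`. -/
def alphaHat (X : Finset ℕ) : ℕ :=
  hatFac (List.zipWith (fun a b => b - a) (1 :: X.sort (· ≤ ·)) (X.sort (· ≤ ·)))

lemma enumFrom_pow_prod (γ : List ℕ) : ∀ s c : ℕ,
    ((List.zipIdx γ s).map (fun p => (c - p.2) ^ p.1)).prod =
    ((List.zipIdx γ (s+1)).map (fun p => (c + 1 - p.2) ^ p.1)).prod := by
  induction γ with
  | nil => intro s c; simp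
  | cons a l ih =>
    intro s c
    simp only [List.zipIdx_cons, List.map_cons, List.prod_cons, ih (s+1) c]
    congr 2
    omega

lemma hatFac_cons (d : ℕ) (γ : List ℕ) : hatFac (d :: γ) = (γ.length + 2)^d * hatFac γ := by
  unfold hatFac
  simp only [List.zipIdx_cons, List.length_cons, List.map_cons, List.prod_cons]
  rw [← enumFrom_pow_prod γ 0]
  congr 2

lemma g_eq (N : ℕ) : ∀ (l : List ℕ) (a : ℕ), l.Pairwise (· ≤ ·) → (∀ x ∈ l, a ≤ x) → (∀ x ∈ l, x ≤ N) →
    hatFac (List.zipWith (fun u v => v - u) (a :: l) l) =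
      ∏ t ∈ Ioc a N, (1 + (l.filter (fun x => t ≤ x)).length) := by
  intro l
  induction l with
  | nil => intro a _ _ _; simp [hatFac]
  | cons x l ih =>
    intro a hs ha hN
    have hax : a ≤ x := ha x (by simp)
    have hxN : x ≤ N := hN x (by simp)
    have hxl : ∀ y ∈ l, x ≤ y := fun y hy => (List.pairwise_cons.mp hs).1 y hy
    rw [List.zipWith_cons_cons, hatFac_cons]
    have hlen : (List.zipWith (fun u v => v - u) (x :: l) l).length = l.length := by
      simp [List.length_zipWith]
    rw [hlen, ih x (List.pairwise_cons.mp hs).2 hxl (fun y hy => hN y (List.mem_cons_of_mem _ hy))]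
    rw [← Finset.prod_Ioc_consecutive _ hax hxN]
    congr 1
    · have h1 : ∀ t ∈ Ioc a x, (1 + ((x :: l).filter (fun y => t ≤ y)).length) = l.length + 2 := by
        intro t ht
        have htx : t ≤ x := (mem_Ioc.mp ht).2
        have : (x :: l).filter (fun y => t ≤ y) = x :: l := by
          rw [List.filter_eq_self]
          intro y hy
          simp only [decide_eq_true_eq]
          rcases List.mem_cons.mp hy with h | h
          · omega
          · exact le_trans htx (hxl y h)
        rw [this, List.length_cons]
        omega
      rw [Finset.prod_congr rfl h1, Finset.prod_const, Nat.card_Ioc]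
    · refine Finset.prod_congr rfl (fun t ht => ?_)
      have : (x :: l).filter (fun y => t ≤ y) = l.filter (fun y => t ≤ y) := by
        rw [List.filter_cons]
        have : ¬ (t ≤ x) := by have := (mem_Ioc.mp ht).1; omega
        simp [this]
      rw [this]

def PiProd (r N : ℕ) (X : Finset ℕ) : ℕ :=
  ∏ t ∈ Ioc 1 N, (r + (X.filter (fun x => t ≤ x)).card)

lemma filter_sort_length (X : Finset ℕ) (p : ℕ → Bool) :
    ((X.sort (· ≤ ·)).filter p).length = (X.filter (fun x => p x)).card := by
  rw [((Finset.sort_perm_toList X (· ≤ ·)).filter p).length_eq]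
  have h1 : (X.filter (fun x => p x)).val = Multiset.filter (fun x => p x) X.val := rfl
  rw [Finset.card_def, h1, ← Finset.coe_toList X, Multiset.filter_coe, Multiset.coe_card]
  congr 1
  ext x
  simp

lemma alphaHat_eq_PiProd (N : ℕ) (X : Finset ℕ) (hX : ∀ x ∈ X, 2 ≤ x ∧ x ≤ N) :
    alphaHat X = PiProd 1 N X := by
  unfold alphaHat PiProd
  rw [g_eq N (X.sort (· ≤ ·)) 1 (Finset.pairwise_sort _ _)
      (fun x hx => by have := (hX x ((Finset.mem_sort _).mp hx)).1; omega)
      (fun x hx => (hX x ((Finset.mem_sort _).mp hx)).2)]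
  refine Finset.prod_congr rfl (fun t _ => ?_)
  rw [filter_sort_length]
  simp

lemma P1 (r N : ℕ) (hN : 1 ≤ N) (J : Finset ℕ) (hJ : ∀ x ∈ J, x ≤ N) :
    PiProd r (N+1) J = r * PiProd r N J := by
  unfold PiProd
  rw [Finset.prod_Ioc_succ_top hN]
  have : J.filter (fun x => N + 1 ≤ x) = ∅ := by
    rw [Finset.filter_eq_empty_iff]
    intro x hx
    have := hJ x hx
    omega
  rw [this]
  simp [mul_comm]

lemma P2 (r N : ℕ) (hN : 1 ≤ N) (J : Finset ℕ) (hJ : ∀ x ∈ J, x ≤ N) :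
    PiProd r (N+1) (insert (N+1) J) = (r+1) * PiProd (r+1) N J := by
  have hnotmem : N + 1 ∉ J := fun h => by have := hJ _ h; omega
  unfold PiProd
  rw [Finset.prod_Ioc_succ_top hN]
  have htop : (insert (N+1) J).filter (fun x => N + 1 ≤ x) = {N+1} := by
    ext x
    simp only [Finset.mem_filter, Finset.mem_insert, Finset.mem_singleton]
    constructor
    · rintro ⟨h1 | h1, h2⟩
      · exact h1
      · have := hJ x h1; omega
    · rintro rfl; exact ⟨Or.inl rfl, le_refl _⟩
  rw [htop]
  rw [mul_comm]
  congr 1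
  refine Finset.prod_congr rfl (fun t ht => ?_)
  have ht' : t ≤ N := (mem_Ioc.mp ht).2
  have : (insert (N+1) J).filter (fun x => t ≤ x) =
      insert (N+1) (J.filter (fun x => t ≤ x)) := by
    rw [Finset.filter_insert, if_pos (by omega)]
  rw [this, Finset.card_insert_of_notMem (fun h => hnotmem (Finset.mem_of_mem_filter _ h))]
  omega

lemma P0 (N : ℕ) (T : Finset ℕ) (hT : ∀ x ∈ T, 3 ≤ x) :
    ∏ t ∈ Ioc 2 (N+1), (1 + (T.filter (fun x => t ≤ x)).card) =
      PiProd 1 N (T.image (fun x => x - 1)) := by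
  unfold PiProd
  have himg : Ioc 2 (N+1) = (Ioc 1 N).image (fun t => t + 1) := by
    ext t
    simp only [Finset.mem_Ioc, Finset.mem_image]
    constructor
    · intro h; exact ⟨t - 1, by omega, by omega⟩
    · rintro ⟨s, hs, rfl⟩; omega
  rw [himg, Finset.prod_image (fun a _ b _ h => by omega)]
  refine Finset.prod_congr rfl (fun t ht => ?_)
  have ht1 : 1 ≤ t := le_of_lt (mem_Ioc.mp ht).1
  congr 1
  have : (T.image (fun x => x - 1)).filter (fun x => t ≤ x) =
      (T.filter (fun x => t + 1 ≤ x)).image (fun x => x - 1) := by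
    ext y
    simp only [Finset.mem_filter, Finset.mem_image]
    constructor
    · rintro ⟨⟨x, hx, rfl⟩, h2⟩
      exact ⟨x, ⟨hx, by have := hT x hx; omega⟩, rfl⟩
    · rintro ⟨x, ⟨hx, h2⟩, rfl⟩
      exact ⟨⟨x, hx, rfl⟩, by have := hT x hx; omega⟩
  rw [this, Finset.card_image_of_injOn]
  intro a ha b hb h
  simp only at h
  have := hT a (Finset.mem_of_mem_filter _ ha)
  have := hT b (Finset.mem_of_mem_filter _ hb)
  omega

lemma Ioc_split (N : ℕ) (hN : 1 ≤ N) : Ioc 1 (N+1) = insert 2 (Ioc 2 (N+1)) := by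
  ext x
  simp only [Finset.mem_Ioc, Finset.mem_insert]
  omega

lemma P3 (N : ℕ) (hN : 1 ≤ N) (T : Finset ℕ) (hT : ∀ x ∈ T, 3 ≤ x) :
    PiProd 1 (N+1) T = (T.card + 1) * PiProd 1 N (T.image (fun x => x - 1)) := by
  have h0 := P0 N T hT
  unfold PiProd at h0 ⊢
  rw [Ioc_split N hN, Finset.prod_insert (by simp), ← h0]
  congr 1
  have : T.filter (fun x => 2 ≤ x) = T := by
    rw [Finset.filter_eq_self]; intro x hx; have := hT x hx; omega
  rw [this]; omega

lemma P4 (N : ℕ) (hN : 1 ≤ N) (T : Finset ℕ) (hT : ∀ x ∈ T, 3 ≤ x) :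
    PiProd 1 (N+1) (insert 2 T) = (T.card + 2) * PiProd 1 N (T.image (fun x => x - 1)) := by
  have h2T : 2 ∉ T := fun h => by have := hT 2 h; omega
  have h0 := P0 N T hT
  unfold PiProd at h0 ⊢
  rw [Ioc_split N hN, Finset.prod_insert (by simp), ← h0]
  have h1 : (insert 2 T).filter (fun x => 2 ≤ x) = insert 2 T := by
    rw [Finset.filter_eq_self]
    intro x hx
    rcases Finset.mem_insert.mp hx with rfl | hx
    · exact le_refl _
    · have := hT x hx; omega
  rw [h1, Finset.card_insert_of_notMem h2T]
  congr 1
  · omega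
  · refine Finset.prod_congr rfl (fun t ht => ?_)
    have ht2 : 2 < t := (mem_Ioc.mp ht).1
    congr 2
    rw [Finset.filter_insert, if_neg (by omega)]

lemma main_ind : ∀ n : ℕ, ∀ r : ℕ, 1 ≤ r → ∀ K : Finset ℕ, K ⊆ Icc 2 (n+1) →
    (r : ℤ) * ∑ J ∈ (Icc 2 (n+1) \ K).powerset,
        (-1 : ℤ) ^ ((Icc 2 (n+1) \ K).card - J.card) * PiProd r (n+1) J
    = ∑ M ∈ K.powerset,
        (-1 : ℤ) ^ (K.card - M.card) * (Nat.choose (r + M.card) (M.card + 1)) *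
          PiProd 1 (n+1) (M.image (fun j => n + 3 - j)) := by
  intro n
  induction n with
  | zero =>
    intro r hr K hK
    have hKe : K = ∅ := by
      have : Icc 2 1 = (∅ : Finset ℕ) := by simp
      rw [this] at hK
      exact Finset.subset_empty.mp hK
    subst hKe
    simp [PiProd, Nat.choose_one_right]
  | succ n ih =>
    intro r hr K hK
    by_cases hmem : (n+1+1) ∈ K
    · -- Case 1 : n+2 ∈ K
      set K₀ := K.erase (n+1+1) with hK0def
      have hnm : (n+1+1) ∉ K₀ := Finset.notMem_erase _ _
      have hKins : K = insert (n+1+1) K₀ := (Finset.insert_erase hmem).symm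
      have hK0sub : K₀ ⊆ Icc 2 (n+1) := by
        intro k hk
        have h1 := Finset.mem_of_mem_erase hk
        have h2 := Finset.ne_of_mem_erase hk
        have h3 := hK h1
        simp only [mem_Icc] at h3 ⊢
        omega
      have hSeq : Icc 2 (n+1+1) \ K = Icc 2 (n+1) \ K₀ := by
        ext x
        simp only [mem_sdiff, mem_Icc, hK0def, Finset.mem_erase]
        constructor
        · rintro ⟨⟨h1, h2⟩, h3⟩
          have hxne : x ≠ n+1+1 := fun h => h3 (h ▸ hmem)
          exact ⟨⟨h1, by omega⟩, fun hc => h3 hc.2⟩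
        · rintro ⟨⟨h1, h2⟩, h3⟩
          exact ⟨⟨h1, by omega⟩, fun hc => h3 ⟨by omega, hc⟩⟩
      -- transform LHS
      have hLHS : ∑ J ∈ (Icc 2 (n+1) \ K₀).powerset,
          (-1 : ℤ) ^ ((Icc 2 (n+1) \ K₀).card - J.card) * PiProd r (n+1+1) J
          = (r : ℤ) * ∑ J ∈ (Icc 2 (n+1) \ K₀).powerset,
          (-1 : ℤ) ^ ((Icc 2 (n+1) \ K₀).card - J.card) * PiProd r (n+1) J := by
        rw [Finset.mul_sum]
        refine Finset.sum_congr rfl (fun J hJ => ?_)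
        have hJsub := Finset.mem_powerset.mp hJ
        have hJbd : ∀ x ∈ J, x ≤ n+1 := by
          intro x hx
          have := hJsub hx
          simp only [mem_sdiff, mem_Icc] at this
          omega
        rw [P1 r (n+1) (by omega) J hJbd]
        push_cast
        ring
      rw [hSeq, hLHS, ← mul_assoc, ← Nat.cast_mul, Nat.cast_mul, mul_assoc,
        ih r hr K₀ hK0sub]
      -- transform RHS
      rw [hKins, Finset.sum_powerset_insert hnm, Finset.mul_sum, ← Finset.sum_add_distrib]
      refine Finset.sum_congr rfl (fun M hM => ?_)
      have hMsub := Finset.mem_powerset.mp hM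
      have hMK : M.card ≤ K₀.card := Finset.card_le_card hMsub
      have hMbd : ∀ j ∈ M, 2 ≤ j ∧ j ≤ n+1 := by
        intro j hj
        have := hK0sub (hMsub hj)
        simp only [mem_Icc] at this
        exact this
      have hnmM : (n+1+1) ∉ M := fun h => hnm (hMsub h)
      -- cards
      have hcK : (insert (n+1+1) K₀).card = K₀.card + 1 :=
        Finset.card_insert_of_notMem hnm
      have hcM : (insert (n+1+1) M).card = M.card + 1 :=
        Finset.card_insert_of_notMem hnmM
      -- images
      have hinj : ∀ a ∈ M, ∀ b ∈ M, n+1+3-a = n+1+3-b → a = b := by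
        intro a ha b hb h
        have := hMbd a ha; have := hMbd b hb
        omega
      have hTcard : (M.image (fun j => n+1+3-j)).card = M.card :=
        Finset.card_image_of_injOn hinj
      have hT3 : ∀ x ∈ M.image (fun j => n+1+3-j), 3 ≤ x := by
        intro x hx
        obtain ⟨j, hj, rfl⟩ := Finset.mem_image.mp hx
        have := hMbd j hj
        omega
      have hTshift : (M.image (fun j => n+1+3-j)).image (fun x => x - 1)
          = M.image (fun j => n+3-j) := by
        rw [Finset.image_image]
        refine Finset.image_congr (fun j hj => ?_)
        have := hMbd j hj
        simp only [Function.comp_apply]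
        omega
      have hPi1 : PiProd 1 (n+1+1) (M.image (fun j => n+1+3-j))
          = (M.card + 1) * PiProd 1 (n+1) (M.image (fun j => n+3-j)) := by
        rw [P3 (n+1) (by omega) _ hT3, hTcard, hTshift]
      have hIns : (insert (n+1+1) M).image (fun j => n+1+3-j)
          = insert 2 (M.image (fun j => n+1+3-j)) := by
        rw [Finset.image_insert]
        congr 1
        omega
      have hPi2 : PiProd 1 (n+1+1) ((insert (n+1+1) M).image (fun j => n+1+3-j))
          = (M.card + 2) * PiProd 1 (n+1) (M.image (fun j => n+3-j)) := by
        rw [hIns, P4 (n+1) (by omega) _ hT3, hTcard, hTshift]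
      rw [hcK, hcM, hPi1, hPi2]
      have he1 : K₀.card + 1 - M.card = (K₀.card - M.card) + 1 := by omega
      have he2 : K₀.card + 1 - (M.card + 1) = K₀.card - M.card := by omega
      rw [he1, he2]
      have hc1 : r + (M.card + 1) = (r + M.card) + 1 := by omega
      have hc2 : M.card + 1 + 1 = (M.card + 1) + 1 := rfl
      rw [hc1]
      have hbin : ((M.card : ℤ) + 2) * (Nat.choose (r + M.card + 1) (M.card + 1 + 1))
          = ((r : ℤ) + M.card + 1) * (Nat.choose (r + M.card) (M.card + 1)) := by
        have h2 : ((r + M.card + 1) * Nat.choose (r + M.card) (M.card + 1) : ℤ)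
            = (Nat.choose (r + M.card + 1) (M.card + 1 + 1)) * (M.card + 2) := by
          exact_mod_cast Nat.add_one_mul_choose_eq (r + M.card) (M.card + 1)
        push_cast at h2 ⊢
        linear_combination -h2
      push_cast
      linear_combination (-(-1 : ℤ)^(K₀.card - M.card) *
        (PiProd 1 (n+1) (M.image (fun j => n+3-j)) : ℤ)) * hbin
    · -- Case 2 : n+2 ∉ K
      have hKsub : K ⊆ Icc 2 (n+1) := by
        intro k hk
        have h1 := hK hk
        have h2 : k ≠ n+1+1 := fun h => hmem (h ▸ hk)
        simp only [mem_Icc] at h1 ⊢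
        omega
      have hS : Icc 2 (n+1+1) \ K = insert (n+1+1) (Icc 2 (n+1) \ K) := by
        ext x
        simp only [mem_sdiff, mem_Icc, Finset.mem_insert]
        constructor
        · rintro ⟨⟨h1, h2⟩, h3⟩
          rcases Nat.lt_or_ge x (n+1+1) with h | h
          · exact Or.inr ⟨⟨h1, by omega⟩, h3⟩
          · exact Or.inl (by omega)
        · rintro (rfl | ⟨⟨h1, h2⟩, h3⟩)
          · exact ⟨⟨by omega, le_refl _⟩, hmem⟩
          · exact ⟨⟨h1, by omega⟩, h3⟩
      have hnmS : (n+1+1) ∉ Icc 2 (n+1) \ K := by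
        simp [mem_sdiff, mem_Icc]
      have hcS : (insert (n+1+1) (Icc 2 (n+1) \ K)).card = (Icc 2 (n+1) \ K).card + 1 :=
        Finset.card_insert_of_notMem hnmS
      rw [hS, Finset.sum_powerset_insert hnmS]
      -- bounds for J in powerset
      have hJbd : ∀ J ∈ (Icc 2 (n+1) \ K).powerset, ∀ x ∈ J, x ≤ n+1 := by
        intro J hJ x hx
        have := (Finset.mem_powerset.mp hJ) hx
        simp only [mem_sdiff, mem_Icc] at this
        omega
      -- first sum
      have h1sum : ∑ J ∈ (Icc 2 (n+1) \ K).powerset,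
          (-1 : ℤ) ^ ((insert (n+1+1) (Icc 2 (n+1) \ K)).card - J.card) * PiProd r (n+1+1) J
          = -((r:ℤ) * ∑ J ∈ (Icc 2 (n+1) \ K).powerset,
              (-1 : ℤ) ^ ((Icc 2 (n+1) \ K).card - J.card) * PiProd r (n+1) J) := by
        rw [neg_mul_eq_neg_mul, Finset.mul_sum]
        refine Finset.sum_congr rfl (fun J hJ => ?_)
        have hJc : J.card ≤ (Icc 2 (n+1) \ K).card :=
          Finset.card_le_card (Finset.mem_powerset.mp hJ)
        rw [P1 r (n+1) (by omega) J (hJbd J hJ), hcS,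
          show (Icc 2 (n+1) \ K).card + 1 - J.card = ((Icc 2 (n+1) \ K).card - J.card) + 1 by omega]
        push_cast
        ring
      -- second sum
      have h2sum : ∑ J ∈ (Icc 2 (n+1) \ K).powerset,
          (-1 : ℤ) ^ ((insert (n+1+1) (Icc 2 (n+1) \ K)).card - (insert (n+1+1) J).card) *
            PiProd r (n+1+1) (insert (n+1+1) J)
          = ((r:ℤ)+1) * ∑ J ∈ (Icc 2 (n+1) \ K).powerset,
              (-1 : ℤ) ^ ((Icc 2 (n+1) \ K).card - J.card) * PiProd (r+1) (n+1) J := by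
        rw [Finset.mul_sum]
        refine Finset.sum_congr rfl (fun J hJ => ?_)
        have hnmJ : (n+1+1) ∉ J := fun h => by have := hJbd J hJ _ h; omega
        rw [P2 r (n+1) (by omega) J (hJbd J hJ), hcS,
          Finset.card_insert_of_notMem hnmJ,
          show (Icc 2 (n+1) \ K).card + 1 - (J.card + 1) = (Icc 2 (n+1) \ K).card - J.card by omega]
        push_cast
        ring
      rw [h1sum, h2sum, mul_add]
      have ih1 := ih r hr K hKsub
      have ih2 := ih (r+1) (by omega) K hKsub
      -- RHS transform
      have hRHS : ∀ M ∈ K.powerset,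
          (PiProd 1 (n+1+1) (M.image (fun j => n+1+3-j)) : ℤ)
          = (M.card + 1) * PiProd 1 (n+1) (M.image (fun j => n+3-j)) := by
        intro M hM
        have hMsub := Finset.mem_powerset.mp hM
        have hMbd : ∀ j ∈ M, 2 ≤ j ∧ j ≤ n+1 := by
          intro j hj
          have := hKsub (hMsub hj)
          simp only [mem_Icc] at this
          exact this
        have hT3 : ∀ x ∈ M.image (fun j => n+1+3-j), 3 ≤ x := by
          intro x hx
          obtain ⟨j, hj, rfl⟩ := Finset.mem_image.mp hx
          have := hMbd j hj
          omega
        have hTcard : (M.image (fun j => n+1+3-j)).card = M.card :=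
          Finset.card_image_of_injOn (fun a ha b hb h => by
            have := hMbd a ha; have := hMbd b hb; omega)
        have hTshift : (M.image (fun j => n+1+3-j)).image (fun x => x - 1)
            = M.image (fun j => n+3-j) := by
          rw [Finset.image_image]
          refine Finset.image_congr (fun j hj => ?_)
          have := hMbd j hj
          simp only [Function.comp_apply]
          omega
        rw [P3 (n+1) (by omega) _ hT3, hTcard, hTshift]
        push_cast
        ring
      calc (r:ℤ) * (-((r:ℤ) * ∑ J ∈ (Icc 2 (n+1) \ K).powerset,
              (-1 : ℤ) ^ ((Icc 2 (n+1) \ K).card - J.card) * PiProd r (n+1) J))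
            + (r:ℤ) * (((r:ℤ)+1) * ∑ J ∈ (Icc 2 (n+1) \ K).powerset,
              (-1 : ℤ) ^ ((Icc 2 (n+1) \ K).card - J.card) * PiProd (r+1) (n+1) J)
          = (r:ℤ) * ((((r:ℤ)+1)) * ∑ J ∈ (Icc 2 (n+1) \ K).powerset,
              (-1 : ℤ) ^ ((Icc 2 (n+1) \ K).card - J.card) * PiProd (r+1) (n+1) J)
            - (r:ℤ) * ((r:ℤ) * ∑ J ∈ (Icc 2 (n+1) \ K).powerset,
              (-1 : ℤ) ^ ((Icc 2 (n+1) \ K).card - J.card) * PiProd r (n+1) J) := by ring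
        _ = (r:ℤ) * (∑ M ∈ K.powerset,
              (-1 : ℤ) ^ (K.card - M.card) * (Nat.choose ((r+1) + M.card) (M.card + 1)) *
                PiProd 1 (n+1) (M.image (fun j => n + 3 - j)))
            - (r:ℤ) * (∑ M ∈ K.powerset,
              (-1 : ℤ) ^ (K.card - M.card) * (Nat.choose (r + M.card) (M.card + 1)) *
                PiProd 1 (n+1) (M.image (fun j => n + 3 - j))) := by
              push_cast at ih2
              rw [← ih1, ← ih2]
        _ = ∑ M ∈ K.powerset,
              (-1 : ℤ) ^ (K.card - M.card) * (Nat.choose (r + M.card) (M.card + 1)) *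
                PiProd 1 (n+1+1) (M.image (fun j => n+1+3-j)) := by
              rw [Finset.mul_sum, Finset.mul_sum, ← Finset.sum_sub_distrib]
              refine Finset.sum_congr rfl (fun M hM => ?_)
              rw [hRHS M hM]
              have hPas : (Nat.choose (r+1+M.card) (M.card+1) : ℤ)
                  = Nat.choose (r+M.card) M.card + Nat.choose (r+M.card) (M.card+1) := by
                rw [show r+1+M.card = (r+M.card)+1 by omega]
                exact_mod_cast Nat.choose_succ_succ (r+M.card) M.card
              have hAbs : ((Nat.choose (r+M.card) (M.card+1)) * (M.card+1) : ℤ)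
                  = (Nat.choose (r+M.card) M.card) * r := by
                have := Nat.choose_succ_right_eq (r+M.card) M.card
                rw [show r+M.card-M.card = r by omega] at this
                exact_mod_cast this
              push_cast at hPas hAbs ⊢
              linear_combination ((-1 : ℤ)^(K.card - M.card) *
                  (PiProd 1 (n+1) (M.image (fun j => n+3-j)) : ℤ)) *
                  ((r:ℤ) * hPas - hAbs)

/-- Reordered sums, with `τ_n(i) = n+3-i` and `J^max = J ∪ {n+2}`. -/
theorem reordering_sums (n : ℕ) (K : Finset ℕ) (hK : K ⊆ Finset.Icc 2 (n+1)) :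
    ∑ J ∈ (Finset.Icc 2 (n+1) \ K).powerset,
        (-1 : ℤ) ^ (n - K.card + J.card) * alphaHat (insert (n+2) J) =
      ∑ J ∈ K.powerset,
        (-1 : ℤ) ^ (K.card - J.card) * (J.card + 2) *
          alphaHat (J.image (fun j => n + 3 - j)) := by
  have hmain := main_ind n 2 (by omega) K hK
  push_cast at hmain
  have hScard : (Icc 2 (n+1) \ K).card = n - K.card := by
    rw [Finset.card_sdiff_of_subset hK, Nat.card_Icc]
    omega
  have hL : ∑ J ∈ (Finset.Icc 2 (n+1) \ K).powerset,
      (-1 : ℤ) ^ (n - K.card + J.card) * alphaHat (insert (n+2) J)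
      = (2:ℤ) * ∑ J ∈ (Icc 2 (n+1) \ K).powerset,
          (-1 : ℤ) ^ ((Icc 2 (n+1) \ K).card - J.card) * PiProd 2 (n+1) J := by
    rw [Finset.mul_sum]
    refine Finset.sum_congr rfl (fun J hJ => ?_)
    have hJsub := Finset.mem_powerset.mp hJ
    have hJbd : ∀ x ∈ J, 2 ≤ x ∧ x ≤ n+1 := by
      intro x hx
      have := hJsub hx
      simp only [mem_sdiff, mem_Icc] at this
      exact this.1
    have h1 : alphaHat (insert (n+2) J) = PiProd 1 (n+2) (insert (n+2) J) := by
      refine alphaHat_eq_PiProd (n+2) _ (fun x hx => ?_)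
      rcases Finset.mem_insert.mp hx with rfl | hx
      · omega
      · have := hJbd x hx; omega
    have h2 : PiProd 1 (n+2) (insert (n+2) J) = 2 * PiProd 2 (n+1) J := by
      have h := P2 1 (n+1) (by omega) J (fun x hx => (hJbd x hx).2)
      norm_num at h
      exact h
    rw [h1, h2, hScard]
    have hj : J.card ≤ n - K.card := by
      rw [← hScard]; exact Finset.card_le_card hJsub
    rw [show n - K.card + J.card = (n - K.card - J.card) + 2 * J.card by omega,
      pow_add, pow_mul, neg_one_sq, one_pow, mul_one]
    push_cast
    ring
  rw [hL, hmain]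
  refine Finset.sum_congr rfl (fun M hM => ?_)
  have hMsub := Finset.mem_powerset.mp hM
  have hMbd : ∀ j ∈ M, 2 ≤ j ∧ j ≤ n+1 := by
    intro j hj
    have := hK (hMsub hj)
    simp only [mem_Icc] at this
    exact this
  have h3 : alphaHat (M.image (fun j => n + 3 - j)) = PiProd 1 (n+1) (M.image (fun j => n + 3 - j)) := by
    refine alphaHat_eq_PiProd (n+1) _ (fun x hx => ?_)
    obtain ⟨j, hj, rfl⟩ := Finset.mem_image.mp hx
    have := hMbd j hj
    omega
  have h4 : Nat.choose (2 + M.card) (M.card + 1) = M.card + 2 := by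
    rw [show 2 + M.card = (M.card + 1) + 1 by omega]
    exact Nat.choose_succ_self_right _
  rw [h3, h4]
  push_cast
  ring
end

section
/- The multivariate Eulerian polynomial A_n is complete: for every subset K ⊆ [2, n+1] there exists a permutation σ ∈ S_{n+1} with DT(σ) = K; hence every multiaffine monomial in the variables x_2, ..., x_{n+1} appears in A_n with a nonzero (positive) coefficient. -/
open Finset

/-- The multivariate Eulerian polynomial `Aₙ = ∑_σ ∏_{i ∈ DT(σ)} x_i`. -/
noncomputable def eulerMv (n : ℕ) : MvPolynomial ℕ ℤ :=
  ∑ σ : Equiv.Perm (Fin (n+1)), ∏ i ∈ DT n σ, MvPolynomial.X i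

/-- The exponent (as a `Finsupp`) of the multiaffine monomial `∏_{i ∈ K} x_i`. -/
noncomputable def expOf (K : Finset ℕ) : ℕ →₀ ℕ := ∑ i ∈ K, Finsupp.single i 1

/-- Append the largest value at the end (in one-line notation). -/
def appendLast (n : ℕ) (σ : Equiv.Perm (Fin (n+1))) : Equiv.Perm (Fin (n+2)) :=
  finSuccEquivLast.trans (σ.optionCongr.trans finSuccEquivLast.symm)

/-- Prepend the largest value at the front (in one-line notation). -/
def prependTop (n : ℕ) (σ : Equiv.Perm (Fin (n+1))) : Equiv.Perm (Fin (n+2)) :=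
  (finSuccEquiv (n+1)).trans (σ.optionCongr.trans finSuccEquivLast.symm)

lemma appendLast_castSucc (n : ℕ) (σ : Equiv.Perm (Fin (n+1))) (i : Fin (n+1)) :
    appendLast n σ i.castSucc = (σ i).castSucc := by
  simp [appendLast]

lemma appendLast_last (n : ℕ) (σ : Equiv.Perm (Fin (n+1))) :
    appendLast n σ (Fin.last (n+1)) = Fin.last (n+1) := by
  simp [appendLast]

lemma prependTop_zero (n : ℕ) (σ : Equiv.Perm (Fin (n+1))) :
    prependTop n σ 0 = Fin.last (n+1) := by
  simp [prependTop]

lemma prependTop_succ (n : ℕ) (σ : Equiv.Perm (Fin (n+1))) (i : Fin (n+1)) :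
    prependTop n σ i.succ = (σ i).castSucc := by
  simp [prependTop]

lemma mem_DT (n : ℕ) (σ : Equiv.Perm (Fin (n+1))) (m : ℕ) :
    m ∈ DT n σ ↔ ∃ i : Fin n, σ i.succ < σ i.castSucc ∧ (σ i.castSucc : ℕ) + 1 = m := by
  simp [DT, descSet, Finset.mem_image, Finset.mem_filter, and_assoc]

lemma DT_appendLast (n : ℕ) (σ : Equiv.Perm (Fin (n+1))) :
    DT (n+1) (appendLast n σ) = DT n σ := by
  ext m
  rw [mem_DT, mem_DT]
  simp only [Fin.exists_fin_succ', Fin.succ_castSucc, Fin.succ_last, appendLast_castSucc,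
    appendLast_last, Fin.castSucc_lt_castSucc_iff, Fin.coe_castSucc]
  constructor
  · rintro (⟨i, h1, h2⟩ | ⟨h1, h2⟩)
    · exact ⟨i, h1, h2⟩
    · exact absurd h1 (lt_asymm (Fin.castSucc_lt_last _))
  · rintro ⟨i, h1, h2⟩
    exact Or.inl ⟨i, h1, h2⟩

lemma DT_prependTop (n : ℕ) (σ : Equiv.Perm (Fin (n+1))) :
    DT (n+1) (prependTop n σ) = insert (n+2) (DT n σ) := by
  ext m
  rw [mem_DT, Finset.mem_insert, mem_DT]
  simp only [Fin.exists_fin_succ, ← Fin.succ_castSucc, prependTop_succ, Fin.castSucc_zero,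
    prependTop_zero, Fin.castSucc_lt_last, true_and, Fin.val_last,
    Fin.castSucc_lt_castSucc_iff, Fin.coe_castSucc]
  constructor
  · rintro (h | ⟨i, h1, h2⟩)
    · left; omega
    · right; exact ⟨i, h1, h2⟩
  · rintro (h | ⟨i, h1, h2⟩)
    · left; omega
    · right; exact ⟨i, h1, h2⟩

lemma exists_perm_DT : ∀ n : ℕ, ∀ K : Finset ℕ, K ⊆ Finset.Icc 2 (n+1) →
    ∃ σ : Equiv.Perm (Fin (n+1)), DT n σ = K := by
  intro n
  induction n with
  | zero =>
    intro K hK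
    refine ⟨1, ?_⟩
    have : K = ∅ := by
      rwa [show Finset.Icc 2 1 = (∅ : Finset ℕ) from rfl, Finset.subset_empty] at hK
    simp [this, DT, descSet]
  | succ n ih =>
    intro K hK
    by_cases h : n + 2 ∈ K
    · have hsub : K.erase (n+2) ⊆ Finset.Icc 2 (n+1) := by
        intro m hm
        have h1 := hK (Finset.mem_of_mem_erase hm)
        have h2 := Finset.ne_of_mem_erase hm
        simp only [Finset.mem_Icc] at h1 ⊢
        omega
      obtain ⟨σ, hσ⟩ := ih (K.erase (n+2)) hsub
      exact ⟨prependTop n σ, by rw [DT_prependTop, hσ, Finset.insert_erase h]⟩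
    · have hsub : K ⊆ Finset.Icc 2 (n+1) := by
        intro m hm
        have h1 := hK hm
        have : m ≠ n + 2 := fun e => h (e ▸ hm)
        simp only [Finset.mem_Icc] at h1 ⊢
        omega
      obtain ⟨σ, hσ⟩ := ih K hsub
      exact ⟨appendLast n σ, by rw [DT_appendLast, hσ]⟩

lemma expOf_apply (K : Finset ℕ) (j : ℕ) : expOf K j = if j ∈ K then 1 else 0 := by
  classical
  simp [expOf, Finsupp.finset_sum_apply, Finsupp.single_apply, Finset.sum_ite_eq']

lemma expOf_injOn {K L : Finset ℕ} (h : expOf K = expOf L) : K = L := by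
  ext j
  have := DFunLike.congr_fun h j
  rw [expOf_apply, expOf_apply] at this
  by_cases hK : j ∈ K <;> by_cases hL : j ∈ L <;> simp [hK, hL] at this ⊢

lemma prod_X_eq_monomial (K : Finset ℕ) :
    (∏ i ∈ K, (MvPolynomial.X i : MvPolynomial ℕ ℤ)) = MvPolynomial.monomial (expOf K) 1 := by
  classical
  induction K using Finset.induction_on with
  | empty => simp [expOf]
  | insert _ _ h ih =>
    rw [Finset.prod_insert h, ih, show expOf (insert _ _) = Finsupp.single _ 1 + expOf _ from
      Finset.sum_insert h, MvPolynomial.monomial_single_add, pow_one]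

/-- The multivariate Eulerian polynomial is complete: every subset of `[2,n+1]` is realized
as a descent top set, hence every multiaffine monomial appears with positive coefficient. -/
theorem eulerMv_complete (n : ℕ) :
    (∀ K : Finset ℕ, K ⊆ Finset.Icc 2 (n+1) →
        ∃ σ : Equiv.Perm (Fin (n+1)), DT n σ = K) ∧
    ∀ K : Finset ℕ, K ⊆ Finset.Icc 2 (n+1) → 0 < (eulerMv n).coeff (expOf K) := by
  classical
  refine ⟨exists_perm_DT n, fun K hK => ?_⟩
  obtain ⟨σ₀, hσ₀⟩ := exists_perm_DT n K hK
  rw [eulerMv, MvPolynomial.coeff_sum]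
  simp only [prod_X_eq_monomial, MvPolynomial.coeff_monomial]
  refine Finset.sum_pos' (fun σ _ => by split_ifs <;> simp) ⟨σ₀, Finset.mem_univ _, ?_⟩
  rw [if_pos (by rw [hσ₀])]
  exact one_pos
end
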